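/- The constant 1/1152 in the third-order Simpson bound is best possible: for every constant C such that |T_φ(a,b)| ≤ C(M₃-m₃)(b-a)³ holds for all C³ functions φ on all intervals [a,b], one has C ≥ 1/1152. Specifically, the function d defined by d(x) = -x³/6 - x/3 for x ≤ -1, d(x) = x⁴/24 + x²/4 - x/6 + 1/24 for -1 ≤ x ≤ 1, and d(x) = x³/6 for x ≥ 1 is C³ with m₃ = -1, M₃ = 1 on any [-A,A] with A > 1, and |T_d(-A,A)| / ((M₃-m₃)(2A)³) → 1/1152 as A → ∞. -/

import Mathlib

open Filter

section SimpsonSharpAux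

lemma hasDerivAt_pow_mul_abs (k : ℕ) (x : ℝ) :
    HasDerivAt (fun y : ℝ => y ^ (k+1) * |y|) (((k:ℝ)+2) * x ^ k * |x|) x := by
  rcases lt_trichotomy x 0 with hx | hx | hx
  · have h : HasDerivAt (fun y : ℝ => -(y ^ (k+2))) (-(((k:ℝ)+2) * x ^ (k+1))) x := by
      have := (hasDerivAt_pow (k+2) x).neg
      refine this.congr_deriv ?_
      push_cast [Nat.add_sub_cancel]
      ring
    have h2 : HasDerivAt (fun y : ℝ => y ^ (k+1) * |y|) (-(((k:ℝ)+2) * x ^ (k+1))) x := by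
      apply h.congr_of_eventuallyEq
      filter_upwards [Iio_mem_nhds hx] with y hy
      rw [abs_of_neg hy]; ring
    convert h2 using 1
    rw [abs_of_neg hx]; ring
  · subst hx
    simp only [abs_zero, mul_zero]
    rw [hasDerivAt_iff_tendsto_slope]
    apply squeeze_zero_norm' (a := fun y : ℝ => |y| ^ (k+1))
    · filter_upwards [self_mem_nhdsWithin] with y hy
      have hy0 : y ≠ 0 := hy
      rw [slope_def_field]
      have : ((y:ℝ) ^ (k+1) * |y| - 0 ^ (k+1) * |0|) / (y - 0) = y ^ (k+1) * |y| / y := by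
        simp [zero_pow (Nat.succ_ne_zero k)]
      rw [this]
      rw [Real.norm_eq_abs, abs_div, abs_mul, abs_pow, abs_abs, mul_div_assoc,
        div_self (abs_ne_zero.2 hy0), mul_one]
    · have : Tendsto (fun y : ℝ => |y| ^ (k+1)) (nhds 0) (nhds (|(0:ℝ)| ^ (k+1))) :=
        (continuous_abs.pow (k+1)).tendsto 0
      simpa using this.mono_left nhdsWithin_le_nhds
  · have h : HasDerivAt (fun y : ℝ => y ^ (k+2)) (((k:ℝ)+2) * x ^ (k+1)) x := by
      have := hasDerivAt_pow (k+2) x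
      refine this.congr_deriv ?_
      push_cast [Nat.add_sub_cancel]
      ring
    have h2 : HasDerivAt (fun y : ℝ => y ^ (k+1) * |y|) (((k:ℝ)+2) * x ^ (k+1)) x := by
      apply h.congr_of_eventuallyEq
      filter_upwards [Ioi_mem_nhds hx] with y hy
      rw [abs_of_pos hy]; ring
    convert h2 using 1
    rw [abs_of_pos hx]; ring

/-- Auxiliary family used for the derivatives of `dFun`. -/
noncomputable def Efam (k : ℕ) (x : ℝ) : ℝ :=
  (x+1)^(k+1) + (x+1)^k * |x+1| - ((x-1)^(k+1) + (x-1)^k * |x-1|)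

lemma hasDerivAt_g (k : ℕ) (x : ℝ) :
    HasDerivAt (fun y : ℝ => y^(k+2) + y^(k+1) * |y|) (((k:ℝ)+2) * (x^(k+1) + x^k * |x|)) x := by
  have h1 := hasDerivAt_pow (k+2) x
  have h2 := hasDerivAt_pow_mul_abs k x
  refine (h1.add h2).congr_deriv ?_
  push_cast [Nat.add_sub_cancel]
  ring

lemma hasDerivAt_Efam (k : ℕ) (x : ℝ) :
    HasDerivAt (Efam (k+1)) (((k:ℝ)+2) * Efam k x) x := by
  have h1 := (hasDerivAt_g k (x+1)).comp x ((hasDerivAt_id x).add_const 1)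
  have h2 := (hasDerivAt_g k (x-1)).comp x ((hasDerivAt_id x).sub_const 1)
  have h := h1.sub h2
  simp only [Function.comp_def, mul_one] at h
  have : Efam (k+1) = fun y : ℝ =>
      ((y+1)^(k+2) + (y+1)^(k+1) * |y+1|) - ((y-1)^(k+2) + (y-1)^(k+1) * |y-1|) := by
    funext y; rfl
  rw [this]
  refine h.congr_deriv ?_
  simp only [Efam]; ring

end SimpsonSharpAux

/-- The piecewise function used to show sharpness of the constant 1/1152. -/
noncomputable def dFun : ℝ → ℝ := fun x =>
  if x ≤ -1 then -x ^ 3 / 6 - x / 3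
  else if x ≤ 1 then x ^ 4 / 24 + x ^ 2 / 4 - x / 6 + 1 / 24
  else x ^ 3 / 6

section SimpsonSharpAux2

noncomputable def dAnti (x : ℝ) : ℝ := Efam 4 x / 240 - x^4/24 - x^2/6
noncomputable def dD1 (x : ℝ) : ℝ := Efam 2 x / 12 - x^2/2 - 1/3
noncomputable def dD2 (x : ℝ) : ℝ := Efam 1 x / 4 - x
noncomputable def dD3 (x : ℝ) : ℝ := Efam 0 x / 2 - 1

lemma dFun_eq : dFun = fun x => Efam 3 x / 48 - x^3/6 - x/3 := by
  funext x
  simp only [dFun, Efam]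
  split_ifs with h1 h2
  · rw [abs_of_nonpos (by linarith), abs_of_nonpos (by linarith)]; ring
  · rw [abs_of_nonneg (by linarith), abs_of_nonpos (by linarith)]; ring
  · rw [abs_of_nonneg (by linarith), abs_of_nonneg (by linarith)]; ring

lemma hasDerivAt_dAnti (x : ℝ) : HasDerivAt dAnti (dFun x) x := by
  have h := (((hasDerivAt_Efam 3 x).div_const 240).sub
    (((hasDerivAt_pow 4 x).div_const 24))).sub ((hasDerivAt_pow 2 x).div_const 6)
  rw [dFun_eq]
  refine h.congr_deriv ?_
  push_cast
  ring

lemma hasDerivAt_dFun (x : ℝ) : HasDerivAt dFun (dD1 x) x := by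
  rw [dFun_eq]
  have h := (((hasDerivAt_Efam 2 x).div_const 48).sub
    (((hasDerivAt_pow 3 x).div_const 6))).sub ((hasDerivAt_id x).div_const 3)
  refine h.congr_deriv ?_
  simp only [dD1]
  push_cast
  ring

lemma hasDerivAt_dD1 (x : ℝ) : HasDerivAt dD1 (dD2 x) x := by
  have h := (((hasDerivAt_Efam 1 x).div_const 12).sub
    (((hasDerivAt_pow 2 x).div_const 2))).sub ((hasDerivAt_const x (1/3:ℝ)))
  refine h.congr_deriv ?_
  simp only [dD2]
  push_cast
  ring

lemma hasDerivAt_dD2 (x : ℝ) : HasDerivAt dD2 (dD3 x) x := by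
  have h := ((hasDerivAt_Efam 0 x).div_const 4).sub (hasDerivAt_id x)
  refine h.congr_deriv ?_
  simp only [dD3]
  push_cast
  ring

lemma dD3_eq (x : ℝ) : dD3 x = (|x+1| - |x-1|) / 2 := by
  simp only [dD3, Efam, pow_one, pow_zero, one_mul]
  ring

lemma continuous_dD3 : Continuous dD3 := by
  have : dD3 = fun x => (|x+1| - |x-1|) / 2 := funext dD3_eq
  rw [this]
  fun_prop

lemma deriv_dFun : deriv dFun = dD1 := funext fun x => (hasDerivAt_dFun x).deriv
lemma deriv_dD1 : deriv dD1 = dD2 := funext fun x => (hasDerivAt_dD1 x).deriv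
lemma deriv_dD2 : deriv dD2 = dD3 := funext fun x => (hasDerivAt_dD2 x).deriv

lemma contDiff_dFun : ContDiff ℝ 3 dFun := by
  rw [show (3 : WithTop ℕ∞) = 2 + 1 from rfl, contDiff_succ_iff_deriv]
  refine ⟨fun x => (hasDerivAt_dFun x).differentiableAt, by simp, ?_⟩
  rw [deriv_dFun, show (2 : WithTop ℕ∞) = 1 + 1 from rfl, contDiff_succ_iff_deriv]
  refine ⟨fun x => (hasDerivAt_dD1 x).differentiableAt, by simp, ?_⟩
  rw [deriv_dD1, show (1 : WithTop ℕ∞) = 0 + 1 from rfl, contDiff_succ_iff_deriv]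
  refine ⟨fun x => (hasDerivAt_dD2 x).differentiableAt, by simp, ?_⟩
  rw [deriv_dD2]
  exact contDiff_zero.mpr continuous_dD3

lemma iteratedDeriv_three : iteratedDeriv 3 dFun = dD3 := by
  rw [show (3:ℕ) = 2+1 from rfl, iteratedDeriv_succ, show (2:ℕ) = 1+1 from rfl,
    iteratedDeriv_succ, iteratedDeriv_one, deriv_dFun, deriv_dD1, deriv_dD2]

lemma dD3_bounds (x : ℝ) : -1 ≤ dD3 x ∧ dD3 x ≤ 1 := by
  rw [dD3_eq]
  have h := abs_abs_sub_abs_le_abs_sub (x+1) (x-1)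
  have h2 : |(x+1) - (x-1)| = 2 := by norm_num
  rw [h2, abs_le] at h
  constructor <;> [linarith [h.1]; linarith [h.2]]

lemma integral_dFun (A : ℝ) : ∫ t in (-A)..A, dFun t = dAnti A - dAnti (-A) :=
  intervalIntegral.integral_eq_sub_of_hasDerivAt (fun x _ => hasDerivAt_dAnti x)
    (contDiff_dFun.continuous.intervalIntegrable _ _)

lemma integral_dFun_val (A : ℝ) (hA : 1 < A) :
    ∫ t in (-A)..A, dFun t = A^4/12 + A^2/6 + 1/60 := by
  rw [integral_dFun]
  simp only [dAnti, Efam]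
  rw [abs_of_nonneg (by linarith : (0:ℝ) ≤ A + 1), abs_of_nonneg (by linarith : (0:ℝ) ≤ A - 1),
    abs_of_nonpos (by linarith : -A + 1 ≤ (0:ℝ)), abs_of_nonpos (by linarith : -A - 1 ≤ (0:ℝ))]
  ring

lemma dFun_neg_val (A : ℝ) (hA : 1 < A) : dFun (-A) = A^3/6 + A/3 := by
  rw [show dFun (-A) = -(-A)^3/6 - (-A)/3 from if_pos (by linarith)]
  ring

lemma dFun_pos_val (A : ℝ) (hA : 1 < A) : dFun A = A^3/6 := by
  simp only [dFun, if_neg (by linarith : ¬ A ≤ -1), if_neg (by linarith : ¬ A ≤ 1)]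

lemma dFun_zero : dFun 0 = 1/24 := by norm_num [dFun]

lemma expr_eq (A : ℝ) (hA : 1 < A) :
    |(dFun (-A) + dFun A) / 6 + 2 / 3 * dFun 0 - (1 / (2 * A)) * ∫ t in (-A)..A, dFun t| /
        ((1 - (-1)) * (2 * A) ^ 3)
    = |1/1152 - (1/576)*(A⁻¹)^2 + (1/576)*(A⁻¹)^3 - (1/1920)*(A⁻¹)^4| := by
  have hA0 : (0:ℝ) < A := by linarith
  have hA0' : A ≠ 0 := ne_of_gt hA0
  rw [integral_dFun_val A hA, dFun_neg_val A hA, dFun_pos_val A hA, dFun_zero]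
  have h16 : (0:ℝ) < (1 - (-1)) * (2 * A) ^ 3 := by positivity
  have hT : (A^3/6 + A/3 + A^3/6) / 6 + 2 / 3 * (1/24) - (1 / (2 * A)) * (A^4/12 + A^2/6 + 1/60)
      = ((1 - (-1)) * (2 * A) ^ 3) *
        (1/1152 - (1/576)*(A⁻¹)^2 + (1/576)*(A⁻¹)^3 - (1/1920)*(A⁻¹)^4) := by
    field_simp
    ring
  rw [hT, abs_mul, abs_of_pos h16, mul_div_cancel_left₀ _ (ne_of_gt h16)]

lemma tendsto_aux :
    Tendsto (fun A : ℝ => |1/1152 - (1/576)*(A⁻¹)^2 + (1/576)*(A⁻¹)^3 - (1/1920)*(A⁻¹)^4|)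
      atTop (nhds (1/1152)) := by
  have h0 : Tendsto (fun A : ℝ => A⁻¹) atTop (nhds 0) := tendsto_inv_atTop_zero
  have h : Tendsto (fun A : ℝ =>
      1/1152 - (1/576)*(A⁻¹)^2 + (1/576)*(A⁻¹)^3 - (1/1920)*(A⁻¹)^4) atTop
      (nhds (1/1152 - (1/576)*0^2 + (1/576)*0^3 - (1/1920)*0^4)) :=
    (((tendsto_const_nhds.sub ((h0.pow 2).const_mul _)).add
      ((h0.pow 3).const_mul _)).sub ((h0.pow 4).const_mul _))
  have h2 := h.abs
  norm_num at h2 ⊢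
  convert h2 using 2

lemma tendsto_main :
    Tendsto
      (fun A : ℝ =>
        |(dFun (-A) + dFun A) / 6 + 2 / 3 * dFun 0 - (1 / (2 * A)) * ∫ t in (-A)..A, dFun t| /
          ((1 - (-1)) * (2 * A) ^ 3))
      atTop (nhds (1 / 1152)) := by
  apply tendsto_aux.congr'
  filter_upwards [eventually_gt_atTop (1:ℝ)] with A hA
  exact (expr_eq A hA).symm

end SimpsonSharpAux2

theorem simpson_stmt9 (C : ℝ)
    (hC : ∀ (a b : ℝ), a < b → ∀ φ : ℝ → ℝ, ContDiff ℝ 3 φ →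
      ∀ m₃ M₃ : ℝ,
        (∀ x ∈ Set.Icc a b, m₃ ≤ iteratedDeriv 3 φ x ∧ iteratedDeriv 3 φ x ≤ M₃) →
        |(φ a + φ b) / 6 + 2 / 3 * φ ((a + b) / 2) - (1 / (b - a)) * ∫ t in a..b, φ t| ≤
          C * (M₃ - m₃) * (b - a) ^ 3) :
    C ≥ 1 / 1152 ∧
      (ContDiff ℝ 3 dFun ∧
        (∀ A : ℝ, 1 < A →
          (∀ x ∈ Set.Icc (-A) A, -1 ≤ iteratedDeriv 3 dFun x ∧ iteratedDeriv 3 dFun x ≤ 1)) ∧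
        Filter.Tendsto
          (fun A : ℝ =>
            |(dFun (-A) + dFun A) / 6 + 2 / 3 * dFun 0 - (1 / (2 * A)) * ∫ t in (-A)..A, dFun t| /
              ((1 - (-1)) * (2 * A) ^ 3))
          Filter.atTop (nhds (1 / 1152))) := by
  have hbounds : ∀ x : ℝ, -1 ≤ iteratedDeriv 3 dFun x ∧ iteratedDeriv 3 dFun x ≤ 1 := by
    intro x
    rw [iteratedDeriv_three]
    exact dD3_bounds x
  refine ⟨?_, contDiff_dFun, fun A _ x _ => hbounds x, tendsto_main⟩
  refine ge_iff_le.mpr (le_of_tendsto tendsto_main ?_)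
  filter_upwards [eventually_gt_atTop (1:ℝ)] with A hA
  have hlt : -A < A := by linarith
  have key := hC (-A) A hlt dFun contDiff_dFun (-1) 1 (fun x _ => hbounds x)
  rw [show (-A + A)/2 = (0:ℝ) by ring, show A - -A = 2 * A by ring] at key
  have h16 : (0:ℝ) < (1 - (-1)) * (2 * A) ^ 3 := by positivity
  rw [div_le_iff₀ h16]
  calc |(dFun (-A) + dFun A) / 6 + 2 / 3 * dFun 0 - 1 / (2 * A) * ∫ t in (-A)..A, dFun t|
      ≤ C * (1 - -1) * (2 * A) ^ 3 := key
    _ = C * ((1 - (-1)) * (2 * A) ^ 3) := by ring
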